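/- Let G=(V,E) be a finite simple graph that is a tree (connected and acyclic). Then TRA(G) ⊆ COR(G), and hence COR(G) = TRA(G): for every p : V → [0,1] and every q : E → ℝ satisfying max(0, p(i)+p(j)−1) ≤ q({i,j}) ≤ min(p(i), p(j)) for all edges {i,j} ∈ E, the pair (p,q) lies in COR(G). -/

import Mathlib

noncomputable section

/-- The extremal point of the correlation polytope associated to a 0/1 assignment. -/
def corPoint {V : Type} (G : SimpleGraph V) (f : V → Bool) :
    (V → ℝ) × (G.edgeSet → ℝ) :=
  (fun i => if f i then 1 else 0,
   fun e => Sym2.lift ⟨fun i j => (if f i then (1 : ℝ) else 0) * (if f j then 1 else 0),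
     fun _ _ => mul_comm _ _⟩ e.1)

/-- The correlation polytope `COR(G)` of a graph `G`. -/
def cor {V : Type} (G : SimpleGraph V) : Set ((V → ℝ) × (G.edgeSet → ℝ)) :=
  convexHull ℝ (Set.range (corPoint G))

namespace CorTra

variable {V : Type} [Fintype V] [DecidableEq V]

/-- Real-valued indicator of a boolean assignment. -/
def bInd (f : V → Bool) (i : V) : ℝ := if f i then 1 else 0

lemma sumSplit (v : V) (H : (V → Bool) → ℝ) :
    ∑ f : V → Bool, H f =
      ∑ f ∈ Finset.univ.filter (fun f => f v = false),
        (H f + H (Function.update f v true)) := by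
  rw [Finset.sum_add_distrib]
  rw [← Finset.sum_filter_add_sum_filter_not Finset.univ (fun f => f v = false) H]
  congr 1
  refine Finset.sum_nbij' (fun f => Function.update f v false)
    (fun f => Function.update f v true) ?_ ?_ ?_ ?_ ?_
  · intro f hf
    simp [Finset.mem_filter]
  · intro f hf
    simp only [Finset.mem_filter, Finset.mem_univ, true_and] at hf ⊢
    simp [hf]
  · intro f hf
    simp only [Finset.mem_filter, Finset.mem_univ, true_and, Bool.not_eq_false] at hf
    funext x
    rcases eq_or_ne x v with rfl | hx
    · simp [hf]
    · simp [hx]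
  · intro f hf
    simp only [Finset.mem_filter, Finset.mem_univ, true_and] at hf
    funext x
    rcases eq_or_ne x v with rfl | hx
    · simp [hf]
    · simp [hx]
  · intro f hf
    simp only [Finset.mem_filter, Finset.mem_univ, true_and, Bool.not_eq_false] at hf
    congr 1
    funext x
    rcases eq_or_ne x v with rfl | hx
    · simp [hf]
    · simp [hx]

lemma exists_product_measure (p : V → ℝ) (hp : ∀ i, 0 ≤ p i ∧ p i ≤ 1) :
    ∃ w : (V → Bool) → ℝ, (∀ f, 0 ≤ w f) ∧ (∑ f, w f = 1) ∧
      (∀ i, ∑ f, w f * bInd f i = p i) := by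
  classical
  set t : V → Bool → ℝ := fun j b => if b then p j else 1 - p j with ht
  refine ⟨fun f => ∏ j, t j (f j), ?_, ?_, ?_⟩
  · intro f
    refine Finset.prod_nonneg fun j _ => ?_
    cases hfj : f j <;> simp [t, (hp j).1, (hp j).2, sub_nonneg]
  · rw [← Fintype.piFinset_univ, ← Finset.prod_univ_sum]
    rw [Finset.prod_eq_one]
    intro j _
    simp [t, Fintype.sum_bool]
  · intro i
    set t' : V → Bool → ℝ := fun j b => if j = i then (if b then p j else 0) else t j b with ht'
    have key : ∀ f : V → Bool, (∏ j, t j (f j)) * bInd f i = ∏ j, t' j (f j) := by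
      intro f
      rw [← Finset.prod_erase_mul _ _ (Finset.mem_univ i),
          ← Finset.prod_erase_mul _ _ (Finset.mem_univ i)]
      have : ∏ j ∈ Finset.univ.erase i, t j (f j) = ∏ j ∈ Finset.univ.erase i, t' j (f j) := by
        refine Finset.prod_congr rfl fun j hj => ?_
        simp [t', Finset.ne_of_mem_erase hj]
      rw [← this, mul_assoc]
      congr 1
      cases hfi : f i <;> simp [bInd, hfi, t', ht]
    simp_rw [key]
    rw [← Fintype.piFinset_univ, ← Finset.prod_univ_sum]
    have : ∀ j, (∑ b : Bool, t' j b) = if j = i then p j else 1 := by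
      intro j
      by_cases hj : j = i <;> simp [t', ht, hj, Fintype.sum_bool]
    simp_rw [this]
    simp

lemma key_induction (G : SimpleGraph V)
    (p : V → ℝ) (q : G.edgeSet → ℝ)
    (hp : ∀ i, 0 ≤ p i ∧ p i ≤ 1)
    (hq : ∀ (e : G.edgeSet) (i j : V), (e : Sym2 V) = s(i, j) →
      max 0 (p i + p j - 1) ≤ q e ∧ q e ≤ min (p i) (p j))
    (r : V) (π : V → V) (d : V → ℕ)
    (hπadj : ∀ v, v ≠ r → G.Adj v (π v))
    (hπd : ∀ v, v ≠ r → d v = d (π v) + 1)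
    (n : ℕ) :
    ∀ (A : Finset V), A.card ≤ n → r ∈ A →
    (∀ v ∈ A, v ≠ r → π v ∈ A) →
    ∃ w : (V → Bool) → ℝ, (∀ f, 0 ≤ w f) ∧ (∑ f, w f = 1) ∧
      (∀ i, ∑ f, w f * bInd f i = p i) ∧
      (∀ u ∈ A, u ≠ r → ∀ e : G.edgeSet, (e : Sym2 V) = s(u, π u) →
        ∑ f, w f * (bInd f u * bInd f (π u)) = q e) := by
  induction n with
  | zero =>
    intro A hcard hr _
    exact absurd (Finset.card_pos.mpr ⟨r, hr⟩) (by omega)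
  | succ n IH =>
    intro A hcard hr hclosed
    by_cases hA : ∀ x ∈ A, x = r
    · -- base case: A = {r}, use the product measure
      obtain ⟨w, hw0, hw1, hwm⟩ := exists_product_measure p hp
      exact ⟨w, hw0, hw1, hwm, fun u huA hur _ _ => absurd (hA u huA) hur⟩
    · push_neg at hA
      obtain ⟨x, hxA, hxr⟩ := hA
      obtain ⟨v, hvB, hvmax⟩ := (A.erase r).exists_max_image d
        ⟨x, Finset.mem_erase.mpr ⟨hxr, hxA⟩⟩
      have hvr : v ≠ r := (Finset.mem_erase.mp hvB).1
      have hvA : v ∈ A := (Finset.mem_erase.mp hvB).2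
      set u₀ := π v with hu₀
      have hadj : G.Adj v u₀ := hπadj v hvr
      have hu₀v : u₀ ≠ v := hadj.ne'
      have hu₀A : u₀ ∈ A := hclosed v hvA hvr
      have hnopar : ∀ u ∈ A, u ≠ r → π u ≠ v := by
        intro u huA hur hcon
        have h1 : d u = d v + 1 := by rw [hπd u hur, hcon]
        have h2 : d u ≤ d v := hvmax u (Finset.mem_erase.mpr ⟨hur, huA⟩)
        omega
      set A' := A.erase v with hA'
      have hrA' : r ∈ A' := Finset.mem_erase.mpr ⟨fun h => hvr h.symm, hr⟩
      have hclosed' : ∀ u ∈ A', u ≠ r → π u ∈ A' := by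
        intro u huA' hur
        have huA : u ∈ A := (Finset.mem_erase.mp huA').2
        exact Finset.mem_erase.mpr ⟨hnopar u huA hur, hclosed u huA hur⟩
      have hcard' : A'.card ≤ n := by
        rw [hA', Finset.card_erase_of_mem hvA]; omega
      obtain ⟨w', hw'0, hw'1, hw'm, hw'e⟩ := IH A' hcard' hrA' hclosed'
      -- the new edge
      have hev : s(v, u₀) ∈ G.edgeSet := G.mem_edgeSet.mpr hadj
      set ev : G.edgeSet := ⟨s(v, u₀), hev⟩ with hevdef
      set qv := q ev with hqv
      obtain ⟨hlow, hhigh⟩ := hq ev v u₀ rfl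
      have hqv0 : 0 ≤ qv := le_trans (le_max_left _ _) hlow
      have hqvlow : p v + p u₀ - 1 ≤ qv := le_trans (le_max_right _ _) hlow
      have hqvpv : qv ≤ p v := le_trans hhigh (min_le_left _ _)
      have hqvpu : qv ≤ p u₀ := le_trans hhigh (min_le_right _ _)
      -- conditional probabilities
      set ρt : ℝ := if p u₀ = 0 then 0 else qv / p u₀ with hρt
      set ρf : ℝ := if p u₀ = 1 then 0 else (p v - qv) / (1 - p u₀) with hρf
      have hρt0 : 0 ≤ ρt := by
        rw [hρt]; split
        · exact le_refl 0
        · exact div_nonneg hqv0 (hp u₀).1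
      have hρt1 : ρt ≤ 1 := by
        rw [hρt]; split
        · exact zero_le_one
        · rename_i h
          have : 0 < p u₀ := lt_of_le_of_ne (hp u₀).1 (Ne.symm h)
          exact (div_le_one this).mpr hqvpu
      have hρtid : p u₀ * ρt = qv := by
        rw [hρt]; split
        · rename_i h
          have : qv = 0 := le_antisymm (h ▸ hqvpu) hqv0
          rw [this, h, mul_zero]
        · rename_i h
          field_simp
      have hρf0 : 0 ≤ ρf := by
        rw [hρf]; split
        · exact le_refl 0
        · rename_i h
          have : 0 < 1 - p u₀ := by
            have := lt_of_le_of_ne (hp u₀).2 h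
            linarith
          exact div_nonneg (by linarith) this.le
      have hρf1 : ρf ≤ 1 := by
        rw [hρf]; split
        · exact zero_le_one
        · rename_i h
          have h2 : 0 < 1 - p u₀ := by
            have := lt_of_le_of_ne (hp u₀).2 h
            linarith
          exact (div_le_one h2).mpr (by linarith)
      have hρfid : (1 - p u₀) * ρf = p v - qv := by
        rw [hρf]; split
        · rename_i h
          have : qv = p v := le_antisymm hqvpv (by linarith)
          rw [h]; ring_nf; linarith
        · rename_i h
          have h2 : (1 : ℝ) - p u₀ ≠ 0 := by
            intro hcon
            exact h (by linarith)
          field_simp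
      -- the conditional probability as a function of the parent value
      set R : (V → Bool) → ℝ := fun f => if f u₀ then ρt else ρf with hR
      have hRinv : ∀ (f : V → Bool) (b : Bool), R (Function.update f v b) = R f := by
        intro f b
        simp [hR, Function.update_of_ne hu₀v]
      have hR0 : ∀ f, 0 ≤ R f := by
        intro f; rw [hR]; dsimp only; split <;> assumption
      have hR1 : ∀ f, R f ≤ 1 := by
        intro f; rw [hR]; dsimp only; split <;> assumption
      -- the new weight function
      set w : (V → Bool) → ℝ := fun f =>
        (w' (Function.update f v true) + w' (Function.update f v false)) *
          (if f v then R f else 1 - R f) with hw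
      have hupdf : ∀ f : V → Bool, f v = false → Function.update f v false = f := by
        intro f hf; funext x
        rcases eq_or_ne x v with rfl | hx
        · simp [hf]
        · simp [hx]
      have hupdt : ∀ f : V → Bool, f v = false →
          Function.update (Function.update f v true) v true = Function.update f v true ∧
          Function.update (Function.update f v true) v false = f := by
        intro f hf
        constructor
        · rw [Function.update_idem]
        · rw [Function.update_idem]; exact hupdf f hf
      -- pointwise values of w
      have hwval : ∀ f : V → Bool, f v = false →
          w f = (w' (Function.update f v true) + w' f) * (1 - R f) ∧
          w (Function.update f v true) = (w' (Function.update f v true) + w' f) * R f := by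
        intro f hf
        obtain ⟨h1, h2⟩ := hupdt f hf
        constructor
        · rw [hw]; dsimp only
          rw [hupdf f hf, hf]; simp
        · rw [hw]; dsimp only
          rw [h1, h2, hRinv]
          simp [Function.update_self]
      -- the two master identities
      have main1 : ∀ c : (V → Bool) → ℝ, (∀ f b, c (Function.update f v b) = c f) →
          ∑ f, w f * c f = ∑ f, w' f * c f := by
        intro c hc
        rw [sumSplit v (fun f => w f * c f), sumSplit v (fun f => w' f * c f)]
        refine Finset.sum_congr rfl fun f hf => ?_
        simp only [Finset.mem_filter, Finset.mem_univ, true_and] at hf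
        obtain ⟨h1, h2⟩ := hwval f hf
        have hcg : c (Function.update f v true) = c f := hc f true
        rw [h1, h2, hcg]
        ring
      have main2 : ∀ c : (V → Bool) → ℝ, (∀ f b, c (Function.update f v b) = c f) →
          ∑ f, w f * (bInd f v * c f) = ∑ f, w' f * (R f * c f) := by
        intro c hc
        rw [sumSplit v (fun f => w f * (bInd f v * c f)),
            sumSplit v (fun f => w' f * (R f * c f))]
        refine Finset.sum_congr rfl fun f hf => ?_
        simp only [Finset.mem_filter, Finset.mem_univ, true_and] at hf
        obtain ⟨h1, h2⟩ := hwval f hf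
        have hcg : c (Function.update f v true) = c f := hc f true
        have hRg : R (Function.update f v true) = R f := hRinv f true
        have hb1 : bInd f v = 0 := by simp [bInd, hf]
        have hb2 : bInd (Function.update f v true) v = 1 := by
          simp [bInd, Function.update_self]
        rw [h1, h2, hcg, hRg, hb1, hb2]
        ring
      -- the correlation sum computations
      have hsumR : ∑ f, w' f * (R f * bInd f u₀) = qv := by
        have : ∀ f, w' f * (R f * bInd f u₀) = ρt * (w' f * bInd f u₀) := by
          intro f
          cases hfu : f u₀ <;> simp [hR, bInd, hfu] <;> ring
        simp_rw [this]
        rw [← Finset.mul_sum, hw'm u₀, mul_comm]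
        exact hρtid
      have hsumR1 : ∑ f, w' f * (R f * 1) = p v := by
        have : ∀ f, w' f * (R f * 1) =
            ρt * (w' f * bInd f u₀) + ρf * (w' f - w' f * bInd f u₀) := by
          intro f
          cases hfu : f u₀ <;> simp [hR, bInd, hfu] <;> ring
        simp_rw [this]
        rw [Finset.sum_add_distrib, ← Finset.mul_sum, ← Finset.mul_sum,
            Finset.sum_sub_distrib, hw'1, hw'm u₀]
        have e1 : ρt * p u₀ = qv := by rw [mul_comm]; exact hρtid
        have e2 : ρf * (1 - p u₀) = p v - qv := by rw [mul_comm]; exact hρfid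
        linarith
      refine ⟨w, ?_, ?_, ?_, ?_⟩
      · intro f
        rw [hw]; dsimp only
        refine mul_nonneg (add_nonneg (hw'0 _) (hw'0 _)) ?_
        split
        · exact hR0 f
        · linarith [hR1 f]
      · have := main1 (fun _ => 1) (fun _ _ => rfl)
        simp only [mul_one] at this
        rw [this, hw'1]
      · intro i
        rcases eq_or_ne i v with rfl | hiv
        · have h2 := main2 (fun _ => 1) (fun _ _ => rfl)
          simpa using h2.trans hsumR1
        · have := main1 (fun f => bInd f i) (fun f b => by
            simp [bInd, Function.update_of_ne hiv])
          rw [this, hw'm i]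
      · intro u huA hur e he
        rcases eq_or_ne u v with rfl | huv
        · -- the new edge
          have heev : e = ev := Subtype.ext (by rw [he, hevdef])
          have := main2 (fun f => bInd f u₀) (fun f b => by
            simp [bInd, Function.update_of_ne hu₀v])
          rw [this, hsumR, heev]
        · have huA' : u ∈ A' := Finset.mem_erase.mpr ⟨huv, huA⟩
          have hπu : π u ≠ v := hnopar u huA hur
          have := main1 (fun f => bInd f u * bInd f (π u)) (fun f b => by
            simp [bInd, Function.update_of_ne huv, Function.update_of_ne hπu])
          rw [this, hw'e u huA' hur e he]

end CorTra

/-- If `G` is a tree then `TRA(G) ⊆ COR(G)` (and hence they are equal, by the reverse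
inclusion which always holds): any `(p, q)` satisfying the transportation inequalities lies
in the correlation polytope. -/
theorem stmt2 {V : Type} [Fintype V] [DecidableEq V] (G : SimpleGraph V)
    (hG : G.IsTree) (p : V → ℝ) (q : G.edgeSet → ℝ)
    (hp : ∀ i : V, 0 ≤ p i ∧ p i ≤ 1)
    (hq : ∀ (e : G.edgeSet) (i j : V), (e : Sym2 V) = s(i, j) →
      max 0 (p i + p j - 1) ≤ q e ∧ q e ≤ min (p i) (p j)) :
    (p, q) ∈ cor G := by
  classical
  obtain ⟨r⟩ : Nonempty V := hG.isConnected.nonempty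
  have hup : ∀ v w : V, ∃! p : G.Walk v w, p.IsPath := hG.existsUnique_path
  choose P hP using fun v => (hup v r).exists
  have huniq : ∀ (i j : V) (a b : G.Walk i j), a.IsPath → b.IsPath → a = b :=
    fun i j a b ha hb => (hup i j).unique ha hb
  -- parent function
  have hparent : ∀ v : V, ∃ x : V, v = r ∨ ∃ h : G.Adj v x, P v = SimpleGraph.Walk.cons h (P x) := by
    intro v
    by_cases hv : v = r
    · exact ⟨v, Or.inl hv⟩
    · obtain ⟨x, hadj, t, hcons⟩ := SimpleGraph.Walk.exists_eq_cons_of_ne hv (P v)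
      have ht : t.IsPath := by
        have := hP v
        rw [hcons] at this
        exact this.of_cons
      have : t = P x := huniq _ _ _ _ ht (hP x)
      exact ⟨x, Or.inr ⟨hadj, by rw [hcons, this]⟩⟩
  choose π hπ using hparent
  have hπ' : ∀ v : V, v ≠ r → ∃ h : G.Adj v (π v), P v = SimpleGraph.Walk.cons h (P (π v)) :=
    fun v hv => (hπ v).resolve_left hv
  set d : V → ℕ := fun v => (P v).length with hd
  have hπd : ∀ v, v ≠ r → d v = d (π v) + 1 := by
    intro v hv
    obtain ⟨h, hc⟩ := hπ' v hv
    rw [hd]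
    simp only
    rw [hc, SimpleGraph.Walk.length_cons]
  have hπadj : ∀ v, v ≠ r → G.Adj v (π v) := fun v hv => (hπ' v hv).1
  -- edge classification
  have hclass : ∀ i j : V, G.Adj i j → (i ≠ r ∧ j = π i) ∨ (j ≠ r ∧ i = π j) := by
    intro i j hadj
    by_cases hmem : j ∈ (P i).support
    · left
      have hir : i ≠ r := by
        rintro rfl
        have : P i = SimpleGraph.Walk.nil := SimpleGraph.Walk.isPath_iff_eq_nil.mp (hP i)
        rw [this] at hmem
        simp at hmem
        exact hadj.ne hmem.symm
      refine ⟨hir, ?_⟩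
      have hsingle : (SimpleGraph.Walk.cons hadj SimpleGraph.Walk.nil).IsPath := by
        simp [hadj.ne]
      have htake : (P i).takeUntil j hmem = SimpleGraph.Walk.cons hadj SimpleGraph.Walk.nil :=
        huniq i j _ _ ((hP i).takeUntil hmem) hsingle
      obtain ⟨h', hc⟩ := hπ' i hir
      have ts := SimpleGraph.Walk.take_spec (P i) hmem
      rw [htake, SimpleGraph.Walk.cons_append, SimpleGraph.Walk.nil_append] at ts
      have h1 : SimpleGraph.Walk.cons hadj ((P i).dropUntil j hmem)
          = SimpleGraph.Walk.cons h' (P (π i)) := ts.trans hc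
      injection h1 with h2 h3
    · right
      have hjr : j ≠ r := by
        rintro rfl
        exact hmem ((P i).end_mem_support)
      refine ⟨hjr, ?_⟩
      have hconsP : (SimpleGraph.Walk.cons hadj.symm (P i)).IsPath :=
        (SimpleGraph.Walk.cons_isPath_iff _ _).mpr ⟨hP i, hmem⟩
      have heq : SimpleGraph.Walk.cons hadj.symm (P i) = P j :=
        huniq j r _ _ hconsP (hP j)
      obtain ⟨h', hc⟩ := hπ' j hjr
      have h1 : SimpleGraph.Walk.cons hadj.symm (P i) = SimpleGraph.Walk.cons h' (P (π j)) := by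
        rw [heq, hc]
      injection h1 with h2 h3
  -- the coupling from the key induction
  obtain ⟨w, hw0, hw1, hwm, hwe⟩ := CorTra.key_induction G p q hp hq r π d hπadj hπd
    Finset.univ.card Finset.univ le_rfl (Finset.mem_univ r) (fun _ _ _ => Finset.mem_univ _)
  -- the weighted sum of corner points equals (p, q)
  have hsum : ∑ f : V → Bool, w f • corPoint G f = (p, q) := by
    refine Prod.ext ?_ ?_
    · rw [Prod.fst_sum]
      funext i
      rw [Finset.sum_apply]
      have : ∀ f : V → Bool, (w f • corPoint G f).1 i = w f * CorTra.bInd f i := by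
        intro f
        simp [corPoint, CorTra.bInd]
      simp_rw [this]
      exact hwm i
    · rw [Prod.snd_sum]
      funext e
      rw [Finset.sum_apply]
      obtain ⟨e, he⟩ := e
      revert he
      induction e using Sym2.ind with
      | _ i j =>
        intro he
        have hadj : G.Adj i j := G.mem_edgeSet.mp he
        have hcor : ∀ f : V → Bool,
            ((w f • corPoint G f).2 ⟨s(i, j), he⟩ : ℝ)
              = w f * (CorTra.bInd f i * CorTra.bInd f j) := by
          intro f
          simp [corPoint, CorTra.bInd]
        simp_rw [hcor]
        rcases hclass i j hadj with ⟨hir, rfl⟩ | ⟨hjr, rfl⟩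
        · exact hwe i (Finset.mem_univ i) hir ⟨s(i, π i), he⟩ rfl
        · have := hwe j (Finset.mem_univ j) hjr ⟨s(π j, j), he⟩ (Sym2.eq_swap)
          rw [← this]
          refine Finset.sum_congr rfl fun f _ => ?_
          ring
  -- conclude via center of mass
  have hmem := Finset.centerMass_mem_convexHull (Finset.univ : Finset (V → Bool))
    (w := w) (z := corPoint G) (fun f _ => hw0 f)
    (by rw [hw1]; exact one_pos) (fun f _ => Set.mem_range_self f)
  rw [Finset.centerMass, hw1, inv_one, one_smul, hsum] at hmem
  exact hmem
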